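/- For a partition λ of n define m(λ) as in the multiplicity formula for Ṽ₃ (1 for (n), (p,p), (p,p,p), and hook-type 4-row partitions (p+q+r+1, p+q+1, p+1, 1); 2 for two-corner partitions of height ≤ 3; 3 for three-corner partitions of height 3; 0 otherwise). Then Σ_{λ ⊢ n} m(λ) = n²/3 + O(n) as n → ∞. -/

import Mathlib

open Classical in
/-- The multiplicity `m_λ(Ṽ₃)` of an irreducible `S_n`-module in `P_n(Ṽ₃)`,
as a function of the multiset of parts of the partition `λ` (Theorem 1). -/
noncomputable def multV3 (s : Multiset ℕ) : ℕ :=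
  if (∃ n : ℕ, 1 ≤ n ∧ s = {n}) ∨ (∃ p : ℕ, 1 ≤ p ∧ s = {p, p}) ∨
      (∃ p : ℕ, 1 ≤ p ∧ s = {p, p, p}) ∨
      (∃ p q r : ℕ, s = {p + q + r + 1, p + q + 1, p + 1, 1}) then 1
  else if ∃ p q : ℕ, 1 ≤ p ∧ 1 ≤ q ∧
      (s = {p + q, p} ∨ s = {p + q, p, p} ∨ s = {p + q, p + q, p}) then 2
  else if ∃ p q r : ℕ, 1 ≤ p ∧ 1 ≤ q ∧ 1 ≤ r ∧ s = {p + q + r, p + q, p} then 3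
  else 0

namespace V3aux

def pH (s : Multiset ℕ) : Prop := ∃ p q r : ℕ, s = {p + q + r + 1, p + q + 1, p + 1, 1}
def pS (s : Multiset ℕ) : Prop :=
  (∃ m : ℕ, 1 ≤ m ∧ s = {m}) ∨ (∃ p : ℕ, 1 ≤ p ∧ s = {p, p}) ∨ (∃ p : ℕ, 1 ≤ p ∧ s = {p, p, p})
def p2 (s : Multiset ℕ) : Prop := ∃ p q : ℕ, 1 ≤ p ∧ 1 ≤ q ∧
  (s = {p + q, p} ∨ s = {p + q, p, p} ∨ s = {p + q, p + q, p})
def p3 (s : Multiset ℕ) : Prop :=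
  ∃ p q r : ℕ, 1 ≤ p ∧ 1 ≤ q ∧ 1 ≤ r ∧ s = {p + q + r, p + q, p}


/-- predicates -/

lemma msort {l1 l2 : List ℕ} (h : (↑l1 : Multiset ℕ) = ↑l2)
    (s1 : l1.Pairwise (· ≥ ·)) (s2 : l2.Pairwise (· ≥ ·)) : l1 = l2 := by
  haveI : IsAntisymm ℕ (· ≥ ·) := ⟨fun _ _ h h' => le_antisymm h' h⟩
  exact List.Perm.eq_of_pairwise (fun _ _ _ _ h h' => le_antisymm h' h) s1 s2 (Multiset.coe_eq_coe.mp h)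

lemma ms2 {a b a' b' : ℕ} (h : ({a, b} : Multiset ℕ) = {a', b'})
    (h1 : b ≤ a) (h1' : b' ≤ a') : a = a' ∧ b = b' := by
  have := msort (l1 := [a,b]) (l2 := [a',b']) h
    (by simp [List.pairwise_cons]; omega) (by simp [List.pairwise_cons]; omega)
  simp_all

lemma ms3 {a b c a' b' c' : ℕ} (h : ({a, b, c} : Multiset ℕ) = {a', b', c'})
    (h1 : b ≤ a) (h2 : c ≤ b) (h1' : b' ≤ a') (h2' : c' ≤ b') :
    a = a' ∧ b = b' ∧ c = c' := by
  have := msort (l1 := [a,b,c]) (l2 := [a',b',c']) h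
    (by simp [List.pairwise_cons]; omega) (by simp [List.pairwise_cons]; omega)
  simp_all

lemma ms4 {a b c d a' b' c' d' : ℕ} (h : ({a, b, c, d} : Multiset ℕ) = {a', b', c', d'})
    (h1 : b ≤ a) (h2 : c ≤ b) (h3 : d ≤ c) (h1' : b' ≤ a') (h2' : c' ≤ b') (h3' : d' ≤ c') :
    a = a' ∧ b = b' ∧ c = c' ∧ d = d' := by
  have := msort (l1 := [a,b,c,d]) (l2 := [a',b',c',d']) h
    (by simp [List.pairwise_cons]; omega) (by simp [List.pairwise_cons]; omega)
  simp_all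

/-- disjointness -/
lemma d1 {s : Multiset ℕ} (h3 : p3 s) : ¬ (pS s ∨ pH s) := by
  obtain ⟨p, q, r, hp, hq, hr, rfl⟩ := h3
  rintro ((⟨m, hm, he⟩ | ⟨a, ha, he⟩ | ⟨a, ha, he⟩) | ⟨a, b, c, he⟩)
  · apply_fun Multiset.card at he; simp at he
  · apply_fun Multiset.card at he; simp at he
  · have h1 : p + q + r ∈ ({a, a, a} : Multiset ℕ) := he ▸ (by simp)
    have h2 : p ∈ ({a, a, a} : Multiset ℕ) := he ▸ (by simp)
    simp at h1 h2; omega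
  · apply_fun Multiset.card at he; simp at he

lemma d2 {s : Multiset ℕ} (h3 : p3 s) : ¬ p2 s := by
  obtain ⟨p, q, r, hp, hq, hr, rfl⟩ := h3
  rintro ⟨a, b, ha, hb, (he | he | he)⟩
  · apply_fun Multiset.card at he; simp at he
  · have h1 : p + q + r ∈ ({a + b, a, a} : Multiset ℕ) := he ▸ (by simp)
    have h2 : p + q ∈ ({a + b, a, a} : Multiset ℕ) := he ▸ (by simp)
    have h4 : p ∈ ({a + b, a, a} : Multiset ℕ) := he ▸ (by simp)
    simp at h1 h2 h4; omega
  · have h1 : p + q + r ∈ ({a + b, a + b, a} : Multiset ℕ) := he ▸ (by simp)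
    have h2 : p + q ∈ ({a + b, a + b, a} : Multiset ℕ) := he ▸ (by simp)
    have h4 : p ∈ ({a + b, a + b, a} : Multiset ℕ) := he ▸ (by simp)
    simp at h1 h2 h4; omega

lemma d3 {s : Multiset ℕ} (hH : pH s) : ¬ p3 s := by
  obtain ⟨p, q, r, rfl⟩ := hH
  rintro ⟨a, b, c, ha, hb, hc, he⟩
  apply_fun Multiset.card at he; simp at he

open Classical in
lemma multV3_eq (s : Multiset ℕ) :
    multV3 s = if pS s ∨ pH s then 1 else if p2 s then 2 else if p3 s then 3 else 0 := by
  have h : ((∃ n : ℕ, 1 ≤ n ∧ s = {n}) ∨ (∃ p : ℕ, 1 ≤ p ∧ s = {p, p}) ∨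
      (∃ p : ℕ, 1 ≤ p ∧ s = {p, p, p}) ∨
      (∃ p q r : ℕ, s = {p + q + r + 1, p + q + 1, p + 1, 1})) ↔ (pS s ∨ pH s) := by
    unfold pS pH
    constructor
    · rintro (h | h | h | h)
      exacts [Or.inl (Or.inl h), Or.inl (Or.inr (Or.inl h)), Or.inl (Or.inr (Or.inr h)), Or.inr h]
    · rintro ((h | h | h) | h)
      exacts [Or.inl h, Or.inr (Or.inl h), Or.inr (Or.inr (Or.inl h)),
        Or.inr (Or.inr (Or.inr h))]
  unfold multV3 p2 p3
  rw [if_congr h rfl rfl]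


open Classical in
lemma low (s : Multiset ℕ) :
    (if pH s then 1 else 0) + (if p3 s then 3 else 0) ≤ multV3 s := by
  rw [multV3_eq]
  by_cases h3 : p3 s
  · have e1 := d1 h3; have e2 := d2 h3
    have e3 : ¬ pH s := fun hH => e1 (Or.inr hH)
    have eS : ¬ pS s := fun hh => e1 (Or.inl hh)
    simp [e2, e3, eS, h3]
  · by_cases hH : pH s
    · have hc : pS s ∨ pH s := Or.inr hH
      simp [hc, hH, h3]
    · simp only [if_neg hH, if_neg h3, add_zero]
      exact Nat.zero_le _

open Classical in
lemma up (s : Multiset ℕ) :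
    multV3 s ≤ (if pH s then 1 else 0) + (if p3 s then 3 else 0)
      + ((if pS s then 1 else 0) + (if p2 s then 2 else 0)) := by
  rw [multV3_eq]
  by_cases hS : pS s <;> by_cases hH : pH s <;> by_cases h2 : p2 s <;>
    by_cases h3 : p3 s <;> simp [hS, hH, h2, h3]


open Finset in
lemma part_ext {n : ℕ} (p q : Nat.Partition n) (h : p.parts = q.parts) : p = q :=
  Nat.Partition.ext h

open Classical Finset in
lemma card_param {α : Type} [DecidableEq α] {n : ℕ} (big : Finset α) (f : α → Multiset ℕ)
    (P : α → Prop) [DecidablePred P]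
    (hpos : ∀ a, P a → ∀ i ∈ f a, 0 < i)
    (hinj : ∀ a b, P a → P b → f a = f b → a = b)
    (hbig : ∀ a, P a → (f a).sum = n → a ∈ big) :
    (Finset.univ.filter (fun lam : Nat.Partition n => ∃ a, P a ∧ lam.parts = f a)).card
      = (big.filter (fun a => P a ∧ (f a).sum = n)).card := by
  classical
  symm
  refine Finset.card_bij
    (fun a ha => (⟨f a, fun {i} hi => hpos a (Finset.mem_filter.mp ha).2.1 i hi,
      (Finset.mem_filter.mp ha).2.2⟩ : Nat.Partition n)) ?_ ?_ ?_
  · intro a ha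
    simp only [Finset.mem_filter, Finset.mem_univ, true_and]
    exact ⟨a, (Finset.mem_filter.mp ha).2.1, rfl⟩
  · intro a ha b hb h
    have : f a = f b := congrArg Nat.Partition.parts h
    exact hinj a b (Finset.mem_filter.mp ha).2.1 (Finset.mem_filter.mp hb).2.1 this
  · intro lam hlam
    obtain ⟨a, hPa, hparts⟩ := (Finset.mem_filter.mp hlam).2
    have hsum : (f a).sum = n := by rw [← hparts]; exact lam.parts_sum
    refine ⟨a, Finset.mem_filter.mpr ⟨hbig a hPa hsum, hPa, hsum⟩, ?_⟩
    exact (part_ext _ _ hparts.symm)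

lemma sum_indicator {α : Type} [Fintype α] (P : α → Prop) [DecidablePred P] (c : ℕ) :
    ∑ x : α, (if P x then c else 0) = c * (Finset.univ.filter P).card := by
  rw [← Finset.sum_filter, Finset.sum_const, smul_eq_mul, mul_comm]

open Classical Finset in
lemma S_low (n : ℕ) :
    (univ.filter fun lam : Nat.Partition n => pH lam.parts).card
      + 3 * (univ.filter fun lam : Nat.Partition n => p3 lam.parts).card
      ≤ ∑ lam : Nat.Partition n, multV3 lam.parts := by
  have h : ∑ lam : Nat.Partition n,
      ((if pH lam.parts then 1 else 0) + (if p3 lam.parts then 3 else 0))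
      = (univ.filter fun lam : Nat.Partition n => pH lam.parts).card
        + 3 * (univ.filter fun lam : Nat.Partition n => p3 lam.parts).card := by
    rw [Finset.sum_add_distrib, sum_indicator, sum_indicator]; ring
  rw [← h]
  exact Finset.sum_le_sum (fun i _ => low i.parts)

open Classical Finset in
lemma S_up (n : ℕ) :
    ∑ lam : Nat.Partition n, multV3 lam.parts
      ≤ (univ.filter fun lam : Nat.Partition n => pH lam.parts).card
        + 3 * (univ.filter fun lam : Nat.Partition n => p3 lam.parts).card
        + ((univ.filter fun lam : Nat.Partition n => pS lam.parts).card
          + 2 * (univ.filter fun lam : Nat.Partition n => p2 lam.parts).card) := by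
  have h : ∑ lam : Nat.Partition n,
      ((if pH lam.parts then 1 else 0) + (if p3 lam.parts then 3 else 0)
        + ((if pS lam.parts then 1 else 0) + (if p2 lam.parts then 2 else 0)))
      = (univ.filter fun lam : Nat.Partition n => pH lam.parts).card
        + 3 * (univ.filter fun lam : Nat.Partition n => p3 lam.parts).card
        + ((univ.filter fun lam : Nat.Partition n => pS lam.parts).card
          + 2 * (univ.filter fun lam : Nat.Partition n => p2 lam.parts).card) := by
    rw [Finset.sum_add_distrib, Finset.sum_add_distrib, Finset.sum_add_distrib,
      sum_indicator, sum_indicator, sum_indicator, sum_indicator]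
    ring
  rw [← h]
  exact Finset.sum_le_sum (fun i _ => up i.parts)


open Finset

def Nfin (m : ℕ) : Finset (ℕ × ℕ × ℕ) :=
  (Finset.range (m+1) ×ˢ Finset.range (m+1) ×ˢ Finset.range (m+1)).filter
    (fun t => 3*t.1 + 2*t.2.1 + t.2.2 = m)

def Pfin (m : ℕ) : Finset (ℕ × ℕ) :=
  (Finset.range (m+1) ×ˢ Finset.range (m+1)).filter (fun t => 3*t.1 + 2*t.2 ≤ m)

def Tfin (m : ℕ) : Finset (ℕ × ℕ) :=
  (Finset.range (m+1) ×ˢ Finset.range (m+1)).filter (fun t => t.1 + t.2 ≤ m)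

lemma N_eq_P (m : ℕ) : (Nfin m).card = (Pfin m).card := by
  apply Finset.card_nbij' (i := fun t => (t.1, t.2.1))
    (j := fun t => (t.1, t.2, m - 3*t.1 - 2*t.2))
  · intro t ht
    simp only [Nfin, Pfin, Finset.mem_coe, mem_filter, mem_product, mem_range] at *
    omega
  · intro t ht
    simp only [Nfin, Pfin, Finset.mem_coe, mem_filter, mem_product, mem_range] at *
    omega
  · intro t ht
    simp only [Nfin, Finset.mem_coe, mem_filter, mem_product, mem_range] at ht
    simp [Prod.ext_iff]
    try omega
  · intro t ht
    simp only [Pfin, Finset.mem_coe, mem_filter, mem_product, mem_range] at ht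
    simp [Prod.ext_iff]
    try omega

lemma T_card (m : ℕ) : 2 * (Tfin m).card = (m+1) * (m+2) := by
  have h1 : (Tfin m).card = ∑ x ∈ Finset.range (m+1), (m+1-x) := by
    rw [Tfin, Finset.card_filter, Finset.sum_product]
    refine Finset.sum_congr rfl (fun x hx => ?_)
    have : (Finset.range (m+1)).filter (fun y => x + y ≤ m) = Finset.range (m+1-x) := by
      ext y; simp only [mem_filter, mem_range]; omega
    rw [← Finset.card_filter, this, Finset.card_range]
  have h2 : ∑ x ∈ Finset.range (m+1), (m+1-x) = ∑ x ∈ Finset.range (m+1), (x+1) := by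
    rw [← Finset.sum_range_reflect (fun i => i + 1) (m+1)]
    refine Finset.sum_congr rfl (fun x hx => ?_)
    simp only [mem_range] at hx
    omega
  have h3 : ∑ x ∈ Finset.range (m+1), (x+1) = (∑ x ∈ Finset.range (m+1), x) + (m+1) := by
    rw [Finset.sum_add_distrib, Finset.sum_const, Finset.card_range, smul_eq_mul, mul_one]
  have h4 := Finset.sum_range_id_mul_two (m+1)
  simp only [Nat.add_sub_cancel] at h4
  rw [h1, h2, h3]
  nlinarith [h4]

lemma P_low (m : ℕ) : (Tfin m).card ≤ 6 * (Pfin m).card := by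
  have h : 6 * (Pfin m).card = ((Pfin m) ×ˢ (Finset.range 3 ×ˢ Finset.range 2)).card := by
    rw [Finset.card_product, Finset.card_product, Finset.card_range, Finset.card_range]
    ring
  rw [h]
  apply Finset.card_le_card_of_injOn
    (f := fun t => ((t.1/3, t.2/2), (t.1 % 3, t.2 % 2)))
  · intro t ht
    simp only [Tfin, Pfin, Finset.mem_coe, mem_filter, mem_product, mem_range] at *
    omega
  · rintro ⟨a1, a2⟩ ha ⟨b1, b2⟩ hb h
    simp only [Prod.ext_iff] at h ⊢
    omega

lemma P_high (m : ℕ) : 6 * (Pfin m).card ≤ (Tfin (m+3)).card := by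
  have h : 6 * (Pfin m).card = ((Pfin m) ×ˢ (Finset.range 3 ×ˢ Finset.range 2)).card := by
    rw [Finset.card_product, Finset.card_product, Finset.card_range, Finset.card_range]
    ring
  rw [h]
  apply Finset.card_le_card_of_injOn
    (f := fun t => (3*t.1.1 + t.2.1, 2*t.1.2 + t.2.2))
  · intro t ht
    simp only [Tfin, Pfin, Finset.mem_coe, mem_filter, mem_product, mem_range] at *
    omega
  · rintro ⟨⟨a1, a2⟩, a3, a4⟩ ha ⟨⟨b1, b2⟩, b3, b4⟩ hb h
    simp only [Pfin, Finset.mem_coe, mem_filter, mem_product, mem_range] at ha hb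
    simp only [Prod.ext_iff] at h ⊢
    omega

lemma sandwich (m : ℕ) :
    (m+1)*(m+2) ≤ 12 * (Nfin m).card ∧ 12 * (Nfin m).card ≤ (m+4)*(m+5) := by
  have e : 12 * (Nfin m).card = 2 * (6 * (Pfin m).card) := by rw [N_eq_P]; ring
  constructor
  · rw [e, ← T_card m]
    exact Nat.mul_le_mul_left 2 (P_low m)
  · rw [e]
    calc 2 * (6 * (Pfin m).card) ≤ 2 * (Tfin (m+3)).card :=
          Nat.mul_le_mul_left 2 (P_high m)
      _ = (m+4)*(m+5) := by rw [T_card]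


open Classical Finset in
lemma L_H (n : ℕ) (h : 4 ≤ n) :
    (univ.filter fun lam : Nat.Partition n => pH lam.parts).card = (Nfin (n-4)).card := by
  have hcong : (univ.filter fun lam : Nat.Partition n => pH lam.parts)
      = univ.filter (fun lam : Nat.Partition n =>
          ∃ a : ℕ × ℕ × ℕ, True ∧
            lam.parts = {a.1+a.2.1+a.2.2+1, a.1+a.2.1+1, a.1+1, 1}) := by
    refine Finset.filter_congr (fun lam _ => ?_)
    constructor
    · rintro ⟨p, q, r, hh⟩; exact ⟨(p,q,r), trivial, hh⟩
    · rintro ⟨⟨p, q, r⟩, -, hh⟩; exact ⟨p, q, r, hh⟩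
  have hcp := card_param (n := n) (big := (range (n+1) ×ˢ range (n+1) ×ˢ range (n+1)))
      (f := fun a : ℕ×ℕ×ℕ => {a.1+a.2.1+a.2.2+1, a.1+a.2.1+1, a.1+1, 1})
      (P := fun _ => True)
      (by rintro ⟨p,q,r⟩ - i hi; simp at hi; omega)
      (by rintro ⟨p,q,r⟩ ⟨p',q',r'⟩ - - hff
          have h4 := ms4 hff (by omega) (by omega) (by omega) (by omega) (by omega) (by omega)
          simp at h4
          simp [Prod.ext_iff]; omega)
      (by rintro ⟨p,q,r⟩ - hsum; simp at hsum; simp [Finset.mem_product]; omega)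
  rw [hcong, hcp]
  congr 1
  ext ⟨p, q, r⟩
  simp [Nfin, Finset.mem_product]
  omega

open Classical Finset in
lemma L_H0 (n : ℕ) (h : n < 4) :
    (univ.filter fun lam : Nat.Partition n => pH lam.parts).card = 0 := by
  rw [Finset.card_eq_zero, Finset.filter_eq_empty_iff]
  rintro lam - ⟨p, q, r, hparts⟩
  have hs := lam.parts_sum
  rw [hparts] at hs
  simp at hs
  omega

open Classical Finset in
lemma L_3 (n : ℕ) (h : 6 ≤ n) :
    (univ.filter fun lam : Nat.Partition n => p3 lam.parts).card = (Nfin (n-6)).card := by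
  have hcong : (univ.filter fun lam : Nat.Partition n => p3 lam.parts)
      = univ.filter (fun lam : Nat.Partition n =>
          ∃ a : ℕ × ℕ × ℕ, (1 ≤ a.1 ∧ 1 ≤ a.2.1 ∧ 1 ≤ a.2.2) ∧
            lam.parts = {a.1+a.2.1+a.2.2, a.1+a.2.1, a.1}) := by
    refine Finset.filter_congr (fun lam _ => ?_)
    constructor
    · rintro ⟨p, q, r, hp, hq, hr, hh⟩; exact ⟨(p,q,r), ⟨hp, hq, hr⟩, hh⟩
    · rintro ⟨⟨p, q, r⟩, ⟨hp, hq, hr⟩, hh⟩; exact ⟨p, q, r, hp, hq, hr, hh⟩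
  have hcp := card_param (n := n) (big := (range (n+1) ×ˢ range (n+1) ×ˢ range (n+1)))
      (f := fun a : ℕ×ℕ×ℕ => {a.1+a.2.1+a.2.2, a.1+a.2.1, a.1})
      (P := fun a => 1 ≤ a.1 ∧ 1 ≤ a.2.1 ∧ 1 ≤ a.2.2)
      (by rintro ⟨p,q,r⟩ hP i hi; simp at hi hP ⊢; omega)
      (by rintro ⟨p,q,r⟩ ⟨p',q',r'⟩ hP hP' hff
          simp at hP hP'
          have h4 := ms3 hff (by omega) (by omega) (by omega) (by omega)
          simp at h4
          simp [Prod.ext_iff]; omega)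
      (by rintro ⟨p,q,r⟩ hP hsum; simp at hsum hP; simp [Finset.mem_product]; omega)
  rw [hcong, hcp]
  apply Finset.card_nbij' (i := fun t : ℕ×ℕ×ℕ => (t.1 - 1, t.2.1 - 1, t.2.2 - 1))
    (j := fun t : ℕ×ℕ×ℕ => (t.1 + 1, t.2.1 + 1, t.2.2 + 1))
  · intro t ht
    simp only [Nfin, Finset.mem_coe, mem_filter, mem_product, mem_range] at *
    simp at ht ⊢
    omega
  · intro t ht
    simp only [Nfin, Finset.mem_coe, mem_filter, mem_product, mem_range] at ht
    simp [Finset.mem_product]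
    omega
  · intro t ht
    simp only [Finset.mem_coe, mem_filter, mem_product, mem_range] at ht
    simp [Prod.ext_iff]
    omega
  · intro t ht
    simp only [Nfin, Finset.mem_coe, mem_filter, mem_product, mem_range] at ht
    simp [Prod.ext_iff]

open Classical Finset in
lemma L_30 (n : ℕ) (h : n < 6) :
    (univ.filter fun lam : Nat.Partition n => p3 lam.parts).card = 0 := by
  rw [Finset.card_eq_zero, Finset.filter_eq_empty_iff]
  rintro lam - ⟨p, q, r, hp, hq, hr, hparts⟩
  have hs := lam.parts_sum
  rw [hparts] at hs
  simp at hs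
  omega

open Classical Finset in
lemma L_S (n : ℕ) :
    (univ.filter fun lam : Nat.Partition n => pS lam.parts).card ≤ 3 := by
  have hcong : (univ.filter fun lam : Nat.Partition n => pS lam.parts)
      = ((univ.filter fun lam : Nat.Partition n => ∃ m : ℕ, 1 ≤ m ∧ lam.parts = {m})
        ∪ (univ.filter fun lam : Nat.Partition n => ∃ p : ℕ, 1 ≤ p ∧ lam.parts = {p, p}))
        ∪ (univ.filter fun lam : Nat.Partition n => ∃ p : ℕ, 1 ≤ p ∧ lam.parts = {p, p, p}) := by
    rw [← Finset.filter_or, ← Finset.filter_or]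
    refine Finset.filter_congr (fun lam _ => ?_)
    unfold pS
    constructor
    · rintro (h | h | h)
      exacts [Or.inl (Or.inl h), Or.inl (Or.inr h), Or.inr h]
    · rintro ((h | h) | h)
      exacts [Or.inl h, Or.inr (Or.inl h), Or.inr (Or.inr h)]
  rw [hcong]
  have c1 : (univ.filter fun lam : Nat.Partition n => ∃ m : ℕ, 1 ≤ m ∧ lam.parts = {m}).card ≤ 1 := by
    rw [Finset.card_le_one]
    intro a ha b hb
    obtain ⟨m, hm, he⟩ := (Finset.mem_filter.mp ha).2
    obtain ⟨m', hm', he'⟩ := (Finset.mem_filter.mp hb).2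
    have hsa := a.parts_sum; rw [he] at hsa; simp at hsa
    have hsb := b.parts_sum; rw [he'] at hsb; simp at hsb
    apply part_ext; rw [he, he']
    congr 1; omega
  have c2 : (univ.filter fun lam : Nat.Partition n => ∃ p : ℕ, 1 ≤ p ∧ lam.parts = {p, p}).card ≤ 1 := by
    rw [Finset.card_le_one]
    intro a ha b hb
    obtain ⟨m, hm, he⟩ := (Finset.mem_filter.mp ha).2
    obtain ⟨m', hm', he'⟩ := (Finset.mem_filter.mp hb).2
    have hsa := a.parts_sum; rw [he] at hsa; simp at hsa
    have hsb := b.parts_sum; rw [he'] at hsb; simp at hsb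
    apply part_ext; rw [he, he']
    have : m = m' := by omega
    rw [this]
  have c3 : (univ.filter fun lam : Nat.Partition n => ∃ p : ℕ, 1 ≤ p ∧ lam.parts = {p, p, p}).card ≤ 1 := by
    rw [Finset.card_le_one]
    intro a ha b hb
    obtain ⟨m, hm, he⟩ := (Finset.mem_filter.mp ha).2
    obtain ⟨m', hm', he'⟩ := (Finset.mem_filter.mp hb).2
    have hsa := a.parts_sum; rw [he] at hsa; simp at hsa
    have hsb := b.parts_sum; rw [he'] at hsb; simp at hsb
    apply part_ext; rw [he, he']
    have : m = m' := by omega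
    rw [this]
  calc _ ≤ ((univ.filter fun lam : Nat.Partition n => ∃ m : ℕ, 1 ≤ m ∧ lam.parts = {m})
        ∪ (univ.filter fun lam : Nat.Partition n => ∃ p : ℕ, 1 ≤ p ∧ lam.parts = {p, p})).card
        + (univ.filter fun lam : Nat.Partition n => ∃ p : ℕ, 1 ≤ p ∧ lam.parts = {p, p, p}).card :=
      Finset.card_union_le _ _
    _ ≤ _ := by
      have := Finset.card_union_le
        (univ.filter fun lam : Nat.Partition n => ∃ m : ℕ, 1 ≤ m ∧ lam.parts = {m})
        (univ.filter fun lam : Nat.Partition n => ∃ p : ℕ, 1 ≤ p ∧ lam.parts = {p, p})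
      omega

open Classical Finset in
lemma L_2gen (n : ℕ) (f : ℕ × ℕ → Multiset ℕ) (c d e : ℕ) (hc : 1 ≤ c) (hd : 1 ≤ d)
    (hpos : ∀ a : ℕ × ℕ, (1 ≤ a.1 ∧ 1 ≤ a.2) → ∀ i ∈ f a, 0 < i)
    (hinj : ∀ a b : ℕ × ℕ, f a = f b → a = b)
    (hsum : ∀ a : ℕ × ℕ, (f a).sum = c * a.1 + d * a.2 + e) :
    (univ.filter fun lam : Nat.Partition n =>
      ∃ a : ℕ × ℕ, (1 ≤ a.1 ∧ 1 ≤ a.2) ∧ lam.parts = f a).card ≤ n + 1 := by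
  have hbig : ∀ a : ℕ × ℕ, (1 ≤ a.1 ∧ 1 ≤ a.2) → (f a).sum = n →
      a ∈ (range (n+1) ×ˢ range (n+1)) := by
    intro a hP hs
    rw [hsum a] at hs
    simp only [Finset.mem_product, Finset.mem_range]
    constructor <;> nlinarith [hP.1, hP.2]
  rw [card_param (n := n) (big := range (n+1) ×ˢ range (n+1)) (f := f)
    (P := fun a => 1 ≤ a.1 ∧ 1 ≤ a.2) (fun a ha => hpos a ha)
    (fun a b _ _ h => hinj a b h) hbig]
  calc _ ≤ (range (n+1)).card := by
        apply Finset.card_le_card_of_injOn (f := Prod.fst)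
        · intro a ha
          simp only [Finset.mem_coe, Finset.mem_filter, Finset.mem_product, Finset.mem_range] at ha
          simp [ha.1.1]
        · intro a ha b hb hfst
          simp only [Finset.mem_coe, Finset.mem_filter, Finset.mem_product] at ha hb
          have hA := ha.2.2; have hB := hb.2.2
          rw [hsum a] at hA; rw [hsum b] at hB
          rw [hfst] at hA
          have h2 : d * a.2 = d * b.2 := by omega
          have h2' : a.2 = b.2 := Nat.eq_of_mul_eq_mul_left (by omega) h2
          exact Prod.ext hfst h2'
      _ = n + 1 := Finset.card_range _

open Classical Finset in
lemma L_2 (n : ℕ) :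
    (univ.filter fun lam : Nat.Partition n => p2 lam.parts).card ≤ 3 * (n + 1) := by
  have hcong : (univ.filter fun lam : Nat.Partition n => p2 lam.parts)
      = ((univ.filter fun lam : Nat.Partition n =>
            ∃ a : ℕ × ℕ, (1 ≤ a.1 ∧ 1 ≤ a.2) ∧ lam.parts = {a.1 + a.2, a.1})
        ∪ (univ.filter fun lam : Nat.Partition n =>
            ∃ a : ℕ × ℕ, (1 ≤ a.1 ∧ 1 ≤ a.2) ∧ lam.parts = {a.1 + a.2, a.1, a.1}))
        ∪ (univ.filter fun lam : Nat.Partition n =>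
            ∃ a : ℕ × ℕ, (1 ≤ a.1 ∧ 1 ≤ a.2) ∧ lam.parts = {a.1 + a.2, a.1 + a.2, a.1}) := by
    rw [← Finset.filter_or, ← Finset.filter_or]
    refine Finset.filter_congr (fun lam _ => ?_)
    unfold p2
    constructor
    · rintro ⟨p, q, hp, hq, (h | h | h)⟩
      exacts [Or.inl (Or.inl ⟨(p, q), ⟨hp, hq⟩, h⟩), Or.inl (Or.inr ⟨(p, q), ⟨hp, hq⟩, h⟩),
        Or.inr ⟨(p, q), ⟨hp, hq⟩, h⟩]
    · rintro ((⟨⟨p, q⟩, ⟨hp, hq⟩, h⟩ | ⟨⟨p, q⟩, ⟨hp, hq⟩, h⟩) | ⟨⟨p, q⟩, ⟨hp, hq⟩, h⟩)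
      exacts [⟨p, q, hp, hq, Or.inl h⟩, ⟨p, q, hp, hq, Or.inr (Or.inl h)⟩,
        ⟨p, q, hp, hq, Or.inr (Or.inr h)⟩]
  rw [hcong]
  have c1 := L_2gen n (fun a => {a.1 + a.2, a.1}) 2 1 0 (by norm_num) (by norm_num)
    (by rintro ⟨p, q⟩ hP i hi; simp at hi hP ⊢; omega)
    (by rintro ⟨p, q⟩ ⟨p', q'⟩ hff
        have h4 := ms2 hff (by omega) (by omega)
        simp at h4
        simp [Prod.ext_iff]; omega)
    (by rintro ⟨p, q⟩; simp; ring)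
  have c2 := L_2gen n (fun a => {a.1 + a.2, a.1, a.1}) 3 1 0 (by norm_num) (by norm_num)
    (by rintro ⟨p, q⟩ hP i hi; simp at hi hP ⊢; omega)
    (by rintro ⟨p, q⟩ ⟨p', q'⟩ hff
        have h4 := ms3 hff (by omega) (by omega) (by omega) (by omega)
        simp at h4
        simp [Prod.ext_iff]; omega)
    (by rintro ⟨p, q⟩; simp; ring)
  have c3 := L_2gen n (fun a => {a.1 + a.2, a.1 + a.2, a.1}) 3 2 0 (by norm_num) (by norm_num)
    (by rintro ⟨p, q⟩ hP i hi; simp at hi hP ⊢; omega)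
    (by rintro ⟨p, q⟩ ⟨p', q'⟩ hff
        have h4 := ms3 hff (by omega) (by omega) (by omega) (by omega)
        simp at h4
        simp [Prod.ext_iff]; omega)
    (by rintro ⟨p, q⟩; simp; ring)
  beta_reduce at c1 c2 c3
  calc _ ≤ _ + _ := Finset.card_union_le _ _
    _ ≤ _ := by
      have := Finset.card_union_le
        (univ.filter fun lam : Nat.Partition n =>
            ∃ a : ℕ × ℕ, (1 ≤ a.1 ∧ 1 ≤ a.2) ∧ lam.parts = {a.1 + a.2, a.1})
        (univ.filter fun lam : Nat.Partition n =>
            ∃ a : ℕ × ℕ, (1 ≤ a.1 ∧ 1 ≤ a.2) ∧ lam.parts = {a.1 + a.2, a.1, a.1})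
      omega

end V3aux

open Classical V3aux Finset

/-- the colength of `Ṽ₃` grows as `n²/3 + O(n)`. -/
theorem colength_V3_asymptotic :
    ∃ C : ℝ, 0 < C ∧ ∀ n : ℕ,
      |((∑ lam : Nat.Partition n, multV3 lam.parts : ℕ) : ℝ) - (n : ℝ) ^ 2 / 3|
        ≤ C * n + C := by
  refine ⟨50, by norm_num, fun n => ?_⟩
  have hlow := S_low n
  have hup := S_up n
  have hS3 := L_S n
  have h2 := L_2 n
  by_cases h6 : 6 ≤ n
  · obtain ⟨k, rfl⟩ : ∃ k, n = k + 6 := ⟨n - 6, by omega⟩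
    have hAH := L_H (k+6) (by omega)
    rw [show k+6-4 = k+2 from by omega] at hAH
    have hA3 := L_3 (k+6) (by omega)
    rw [show k+6-6 = k from by omega] at hA3
    have s1 := sandwich (k+2)
    have s2 := sandwich k
    have e1 : (k+2+1)*(k+2+2) = k*k + 7*k + 12 := by ring
    have e2 : (k+2+4)*(k+2+5) = k*k + 13*k + 42 := by ring
    have e3 : (k+1)*(k+2) = k*k + 3*k + 2 := by ring
    have e4 : (k+4)*(k+5) = k*k + 9*k + 20 := by ring
    set S : ℕ := ∑ lam : Nat.Partition (k+6), multV3 lam.parts with hSdef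
    clear_value S
    have nu : 12 * S ≤ 4*(k*k) + 112*k + 642 := by linarith
    have nl : 4*(k*k) + 16*k + 18 ≤ 12 * S := by linarith
    have nuR : 12 * (S : ℝ) ≤ 4*((k:ℝ)*(k:ℝ)) + 112*(k:ℝ) + 642 := by exact_mod_cast nu
    have nlR : 4*((k:ℝ)*(k:ℝ)) + 16*(k:ℝ) + 18 ≤ 12 * (S : ℝ) := by exact_mod_cast nl
    clear hlow hup hS3 h2 hAH hA3 s1 s2 e1 e2 e3 e4 hSdef nu nl
    rw [abs_le, show ((k+6:ℕ):ℝ) = (k:ℝ)+6 from by push_cast; ring]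
    have hk : (0:ℝ) ≤ (k:ℝ) := Nat.cast_nonneg k
    constructor
    · nlinarith [nuR, nlR, hk]
    · nlinarith [nuR, nlR, hk]
  · have hA3 := L_30 n (by omega)
    have hAH : (univ.filter fun lam : Nat.Partition n => pH lam.parts).card ≤ 2 := by
      rcases lt_or_ge n 4 with h4 | h4
      · rw [L_H0 n h4]; omega
      · have hh4 : n = 4 ∨ n = 5 := by omega
        rcases hh4 with rfl | rfl
        · rw [L_H 4 (by norm_num)]
          have := (sandwich (4-4)).2
          omega
        · rw [L_H 5 (by norm_num)]
          have := (sandwich (5-4)).2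
          omega
    set S : ℕ := ∑ lam : Nat.Partition n, multV3 lam.parts with hSdef
    clear_value S
    have hS41 : S ≤ 41 := by
      have hn5 : n ≤ 5 := by omega
      omega
    rw [abs_le]
    have hk : (0:ℝ) ≤ (n:ℝ) := Nat.cast_nonneg n
    have hn5R : (n:ℝ) ≤ 5 := by exact_mod_cast (by omega : n ≤ 5)
    have hSR : (S : ℝ) ≤ 41 := by exact_mod_cast hS41
    have hS0 : (0:ℝ) ≤ (S : ℝ) := Nat.cast_nonneg _
    clear hlow hup hS3 h2 hAH hA3 hSdef hS41 h6
    constructor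
    · nlinarith [hk, hn5R, hSR, hS0]
    · nlinarith [hk, hn5R, hSR, hS0]
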